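/- If the sequence (a_n) satisfies c·a_{n+2} + b·a_{n+1} + a·a_n = 0 and P*_m(z) = ∑_{n=0}^m a_n z^{m-n}, then the generating function identity ∑_{m≥0} P*_m(z) t^m = (c·a_0 + (c·a_1 + b·a_0)t)/((c + bt + at²)(1 − tz)) holds as formal power series in t (with coefficients polynomials in z). -/

import Mathlib

open PowerSeries

theorem reciprocal_polys_generating_function
    (a b c : ℝ) (hc : c ≠ 0) (aseq : ℕ → ℝ)
    (hrec : ∀ n : ℕ, c * aseq (n + 2) + b * aseq (n + 1) + a * aseq n = 0)
    (Pstar : ℕ → Polynomial ℝ)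
    (hP : ∀ m : ℕ, Pstar m
      = ∑ n ∈ Finset.range (m + 1), Polynomial.C (aseq n) * Polynomial.X ^ (m - n)) :
    PowerSeries.mk (fun m => Pstar m)
      * ((PowerSeries.C (R := Polynomial ℝ) (Polynomial.C c)
            + PowerSeries.C (R := Polynomial ℝ) (Polynomial.C b) * PowerSeries.X
            + PowerSeries.C (R := Polynomial ℝ) (Polynomial.C a) * PowerSeries.X ^ 2)
          * (1 - PowerSeries.C (R := Polynomial ℝ) Polynomial.X * PowerSeries.X))
      = PowerSeries.C (R := Polynomial ℝ) (Polynomial.C (c * aseq 0))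
        + PowerSeries.C (R := Polynomial ℝ) (Polynomial.C (c * aseq 1 + b * aseq 0))
            * PowerSeries.X := by
  set S : PowerSeries (Polynomial ℝ) := PowerSeries.mk (fun m => Polynomial.C (aseq m)) with hS
  have h1 : PowerSeries.mk (fun m => Pstar m)
      * (1 - PowerSeries.C (R := Polynomial ℝ) Polynomial.X * PowerSeries.X) = S := by
    apply PowerSeries.ext; intro n
    rw [mul_sub, mul_one, map_sub]
    have : PowerSeries.mk (fun m => Pstar m) * (PowerSeries.C (R := Polynomial ℝ) Polynomial.X * PowerSeries.X)
        = PowerSeries.C (R := Polynomial ℝ) Polynomial.X * (PowerSeries.mk (fun m => Pstar m) * PowerSeries.X) := by ring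
    rw [this]
    cases n with
    | zero =>
      simp [hP 0, hS]
    | succ k =>
      rw [PowerSeries.coeff_C_mul, PowerSeries.coeff_succ_mul_X, PowerSeries.coeff_mk,
        PowerSeries.coeff_mk, PowerSeries.coeff_mk, hP (k+1), hP k, Finset.sum_range_succ]
      have : ∀ n ∈ Finset.range (k+1),
          Polynomial.C (aseq n) * Polynomial.X ^ (k + 1 - n)
          = Polynomial.X * (Polynomial.C (aseq n) * Polynomial.X ^ (k - n)) := by
        intro n hn
        rw [Finset.mem_range] at hn
        have : k + 1 - n = (k - n) + 1 := by omega
        rw [this, pow_succ]; ring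
      rw [Finset.sum_congr rfl this, ← Finset.mul_sum]
      simp
  calc PowerSeries.mk (fun m => Pstar m)
      * ((PowerSeries.C (R := Polynomial ℝ) (Polynomial.C c)
            + PowerSeries.C (R := Polynomial ℝ) (Polynomial.C b) * PowerSeries.X
            + PowerSeries.C (R := Polynomial ℝ) (Polynomial.C a) * PowerSeries.X ^ 2)
          * (1 - PowerSeries.C (R := Polynomial ℝ) Polynomial.X * PowerSeries.X))
      = (PowerSeries.mk (fun m => Pstar m) * (1 - PowerSeries.C (R := Polynomial ℝ) Polynomial.X * PowerSeries.X))
        * (PowerSeries.C (R := Polynomial ℝ) (Polynomial.C c)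
            + PowerSeries.C (R := Polynomial ℝ) (Polynomial.C b) * PowerSeries.X
            + PowerSeries.C (R := Polynomial ℝ) (Polynomial.C a) * PowerSeries.X ^ 2) := by ring
    _ = S * (PowerSeries.C (R := Polynomial ℝ) (Polynomial.C c)
            + PowerSeries.C (R := Polynomial ℝ) (Polynomial.C b) * PowerSeries.X
            + PowerSeries.C (R := Polynomial ℝ) (Polynomial.C a) * PowerSeries.X ^ 2) := by rw [h1]
    _ = _ := by
        apply PowerSeries.ext; intro n
        rw [mul_add, mul_add, map_add, map_add]
        have e1 : ∀ n, (PowerSeries.coeff (R := Polynomial ℝ) n) (S * PowerSeries.C (R := Polynomial ℝ) (Polynomial.C c)) = Polynomial.C c * Polynomial.C (aseq n) := by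
          intro n; rw [mul_comm, PowerSeries.coeff_C_mul, hS, PowerSeries.coeff_mk]
        have e2 : ∀ n, (PowerSeries.coeff (R := Polynomial ℝ) n) (S * (PowerSeries.C (R := Polynomial ℝ) (Polynomial.C b) * PowerSeries.X))
            = if n = 0 then 0 else Polynomial.C b * Polynomial.C (aseq (n-1)) := by
          intro n
          have : S * (PowerSeries.C (R := Polynomial ℝ) (Polynomial.C b) * PowerSeries.X) = PowerSeries.C (R := Polynomial ℝ) (Polynomial.C b) * (S * PowerSeries.X) := by ring
          rw [this, PowerSeries.coeff_C_mul]
          cases n with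
          | zero => simp
          | succ k => rw [PowerSeries.coeff_succ_mul_X]; simp [hS]
        have e3 : ∀ n, (PowerSeries.coeff (R := Polynomial ℝ) n) (S * (PowerSeries.C (R := Polynomial ℝ) (Polynomial.C a) * PowerSeries.X ^ 2))
            = if n ≤ 1 then 0 else Polynomial.C a * Polynomial.C (aseq (n-2)) := by
          intro n
          have : S * (PowerSeries.C (R := Polynomial ℝ) (Polynomial.C a) * PowerSeries.X ^ 2) = PowerSeries.C (R := Polynomial ℝ) (Polynomial.C a) * (S * PowerSeries.X * PowerSeries.X) := by ring
          rw [this, PowerSeries.coeff_C_mul]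
          match n with
          | 0 => simp
          | 1 => simp [PowerSeries.coeff_succ_mul_X, PowerSeries.coeff_zero_mul_X]
          | (k+2) => simp [PowerSeries.coeff_succ_mul_X, hS]
        rw [e1, e2, e3]
        match n with
        | 0 => simp [mul_comm]
        | 1 => simp [PowerSeries.coeff_one_X]
        | (k+2) =>
          simp only [if_neg (by omega : ¬ k+2 = 0), if_neg (by omega : ¬ k+2 ≤ 1)]
          have h0 : (PowerSeries.coeff (R := Polynomial ℝ) (k+2)) (PowerSeries.C (R := Polynomial ℝ) (Polynomial.C (c * aseq 0))) = 0 := by simp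
          have h1 : (PowerSeries.coeff (R := Polynomial ℝ) (k+2)) (PowerSeries.C (R := Polynomial ℝ) (Polynomial.C (c * aseq 1 + b * aseq 0)) * PowerSeries.X) = 0 := by
            simp [PowerSeries.coeff_succ_mul_X, PowerSeries.coeff_C]
          rw [map_add, h0, h1]
          simp only [Nat.add_sub_cancel]
          rw [← Polynomial.C_mul, ← Polynomial.C_mul, ← Polynomial.C_mul, ← Polynomial.C_add, ← Polynomial.C_add]
          have := hrec k
          simp only [add_zero]
          rw [show k + 2 - 1 = k + 1 by omega]
          rw [this]; simp
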